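/- arXiv:2503.23217 — 5 statements merged into one kernel-verified Lean document; each statement's English description precedes it below -/
import Mathlib

section
/- Given sequences c_1,...,c_k and d_1,...,d_k of nonnegative reals with all d_i > 0 and sum_{i=1}^k d_i * c_i >= 1, there exists a nonempty subset I of {1,...,k} such that min_{i in I} c_i >= 1 / (alpha * sum_{i in I} d_i), where alpha = 1 + log( (sum_{i=1}^k d_i) / (min_{i=1}^k d_i) ). -/
open Finset
open Fin.NatCast

lemma aux_sum (e : ℕ → ℝ) (he : ∀ i, 0 < e i) (n : ℕ) :
    ∑ j ∈ range (n+1), e j / (∑ i ∈ range (j+1), e i) ≤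
      1 + Real.log (∑ i ∈ range (n+1), e i) - Real.log (e 0) := by
  induction n with
  | zero => simp [div_self (he 0).ne']
  | succ n ih =>
    have hSpos : ∀ m : ℕ, 0 < ∑ i ∈ range (m+1), e i :=
      fun m => Finset.sum_pos (fun i _ => he i) (by simp)
    rw [Finset.sum_range_succ]
    have h1 : e (n+1) / (∑ i ∈ range (n+1+1), e i) ≤
        Real.log (∑ i ∈ range (n+1+1), e i) - Real.log (∑ i ∈ range (n+1), e i) := by
      have hA := hSpos n
      have hB := hSpos (n+1)
      have hBA : (∑ i ∈ range (n+1+1), e i) = (∑ i ∈ range (n+1), e i) + e (n+1) :=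
        Finset.sum_range_succ e (n+1)
      have hlog : Real.log ((∑ i ∈ range (n+1), e i) / (∑ i ∈ range (n+1+1), e i)) ≤
          (∑ i ∈ range (n+1), e i) / (∑ i ∈ range (n+1+1), e i) - 1 :=
        Real.log_le_sub_one_of_pos (by positivity)
      rw [Real.log_div hA.ne' hB.ne'] at hlog
      have heq : e (n+1) / (∑ i ∈ range (n+1+1), e i) =
          1 - (∑ i ∈ range (n+1), e i) / (∑ i ∈ range (n+1+1), e i) := by
        field_simp
        linarith [hBA]
      rw [heq]
      linarith [hlog]
    linarith [ih]

lemma fin_Iic_sum {k : ℕ} (f : Fin (k+1) → ℝ) (j : Fin (k+1)) :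
    ∑ i ∈ Finset.Iic j, f i = ∑ i ∈ Finset.range (j.val + 1), f i := by
  refine Finset.sum_nbij' (fun a => a.val) (fun a => (a : Fin (k+1))) ?_ ?_ ?_ ?_ ?_
  · intro a ha
    simp only [Finset.mem_Iic] at ha
    simp only [Finset.mem_range]
    omega
  · intro a ha
    simp only [Finset.mem_range] at ha
    simp only [Finset.mem_Iic]
    have hlt : a < k + 1 := by omega
    rw [Fin.le_def, Fin.val_cast_of_lt hlt]
    omega
  · intro a _; simp
  · intro a ha
    simp only [Finset.mem_range] at ha
    have hjk := j.isLt
    exact Fin.val_cast_of_lt (by omega)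
  · intro a _; simp

/-- Bucketing lemma: given nonnegative `c i`, positive `d i` with `∑ d i * c i ≥ 1`,
there is a nonempty subset `I` with `min_{i ∈ I} c i ≥ 1 / (α * ∑_{i ∈ I} d i)`,
where `α = 1 + log((∑ d) / (min d))`. -/
theorem stmt0 (k : ℕ) (c d : Fin (k + 1) → ℝ)
    (hc : ∀ i, 0 ≤ c i) (hd : ∀ i, 0 < d i)
    (hsum : 1 ≤ ∑ i, d i * c i) :
    ∃ (I : Finset (Fin (k + 1))) (hI : I.Nonempty),
      1 / ((1 + Real.log ((∑ i, d i) / Finset.univ.inf' Finset.univ_nonempty d)) *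
            ∑ i ∈ I, d i) ≤ I.inf' hI c := by
  by_contra hcon
  push_neg at hcon
  set dm := Finset.univ.inf' Finset.univ_nonempty d with hdm
  set α := 1 + Real.log ((∑ i, d i) / dm) with hα
  have hdm_pos : 0 < dm := by
    rw [hdm, Finset.lt_inf'_iff]
    exact fun i _ => hd i
  have hD_pos : 0 < ∑ i, d i := Finset.sum_pos (fun i _ => hd i) Finset.univ_nonempty
  have hdmD : dm ≤ ∑ i, d i := by
    calc dm ≤ d 0 := Finset.inf'_le d (Finset.mem_univ 0)
    _ ≤ ∑ i, d i := Finset.single_le_sum (fun i _ => (hd i).le) (Finset.mem_univ 0)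
  have hα1 : 1 ≤ α := by
    rw [hα]
    have : 0 ≤ Real.log ((∑ i, d i) / dm) :=
      Real.log_nonneg ((one_le_div hdm_pos).2 hdmD)
    linarith
  have hαpos : 0 < α := lt_of_lt_of_le one_pos hα1
  -- sort
  set σ := Tuple.sort (fun i => -c i) with hσ
  have hmono : Monotone ((fun i => -c i) ∘ σ) := Tuple.monotone_sort (fun i => -c i)
  have hant : ∀ i j : Fin (k+1), i ≤ j → c (σ j) ≤ c (σ i) := by
    intro i j hij
    have := hmono hij
    simpa using this
  set e' : ℕ → ℝ := fun j => d (σ (j : Fin (k+1))) with he'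
  have he'pos : ∀ j, 0 < e' j := fun j => hd _
  set S : ℕ → ℝ := fun j => ∑ i ∈ range (j+1), e' i with hS
  have hSpos : ∀ m : ℕ, 0 < S m := fun m => Finset.sum_pos (fun i _ => he'pos i) (by simp)
  -- key claim from the contradiction hypothesis
  have claim : ∀ j : Fin (k+1), c (σ j) < 1 / (α * S j.val) := by
    intro j
    set I := (Finset.Iic j).image σ with hI
    have hIne : I.Nonempty :=
      ⟨σ j, Finset.mem_image_of_mem σ (Finset.mem_Iic.2 le_rfl)⟩
    have hsumI : ∑ i ∈ I, d i = ∑ i ∈ Finset.Iic j, d (σ i) :=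
      Finset.sum_image (fun x _ y _ h => σ.injective h)
    have hIic : ∑ i ∈ Finset.Iic j, d (σ i) = S j.val := by
      rw [fin_Iic_sum (fun i => d (σ i)) j]
    have hle : c (σ j) ≤ I.inf' hIne c := by
      apply Finset.le_inf'
      intro x hx
      obtain ⟨i, hi, rfl⟩ := Finset.mem_image.1 hx
      exact hant i j (Finset.mem_Iic.1 hi)
    have hlt := hcon I hIne
    rw [hsumI, hIic] at hlt
    exact lt_of_le_of_lt hle hlt
  -- rewrite the total sum after sorting
  have htot : ∑ i, d i * c i = ∑ j ∈ range (k+1), e' j * c (σ (j : Fin (k+1))) := by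
    rw [← Equiv.sum_comp σ (fun i => d i * c i)]
    rw [← Fin.sum_univ_eq_sum_range (fun j => e' j * c (σ (j : Fin (k+1)))) (k+1)]
    apply Finset.sum_congr rfl
    intro i _
    simp [he']
  -- strict bound
  have hstrict : ∑ j ∈ range (k+1), e' j * c (σ (j : Fin (k+1))) <
      ∑ j ∈ range (k+1), e' j * (1 / (α * S j)) := by
    apply Finset.sum_lt_sum_of_nonempty (by simp)
    intro j hj
    have hjk : j < k + 1 := Finset.mem_range.1 hj
    have hkey := claim (j : Fin (k+1))
    rw [Fin.val_cast_of_lt hjk] at hkey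
    exact mul_lt_mul_of_pos_left hkey (he'pos j)
  have heq2 : ∑ j ∈ range (k+1), e' j * (1 / (α * S j)) =
      (1/α) * ∑ j ∈ range (k+1), e' j / S j := by
    rw [Finset.mul_sum]
    apply Finset.sum_congr rfl
    intro j _
    have := (hSpos j).ne'
    field_simp
  have haux : ∑ j ∈ range (k+1), e' j / S j ≤ 1 + Real.log (S k) - Real.log (e' 0) :=
    aux_sum e' he'pos k
  have hSk : S k = ∑ i, d i := by
    show ∑ i ∈ range (k+1), e' i = ∑ i, d i
    rw [← Fin.sum_univ_eq_sum_range (fun j => e' j) (k+1)]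
    rw [← Equiv.sum_comp σ d]
    apply Finset.sum_congr rfl
    intro i _
    simp [he']
  have hloge0 : Real.log dm ≤ Real.log (e' 0) :=
    Real.log_le_log hdm_pos (Finset.inf'_le d (Finset.mem_univ _))
  have hfin : 1 + Real.log (S k) - Real.log (e' 0) ≤ α := by
    rw [hSk, hα, Real.log_div hD_pos.ne' hdm_pos.ne']
    linarith
  have : (1 : ℝ) < 1 := by
    calc (1:ℝ) ≤ ∑ i, d i * c i := hsum
    _ = ∑ j ∈ range (k+1), e' j * c (σ (j : Fin (k+1))) := htot
    _ < ∑ j ∈ range (k+1), e' j * (1 / (α * S j)) := hstrict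
    _ = (1/α) * ∑ j ∈ range (k+1), e' j / S j := heq2
    _ ≤ (1/α) * (1 + Real.log (S k) - Real.log (e' 0)) := by
        apply mul_le_mul_of_nonneg_left haux (by positivity)
    _ ≤ (1/α) * α := by
        apply mul_le_mul_of_nonneg_left hfin (by positivity)
    _ = 1 := by field_simp
  exact absurd this (lt_irrefl 1)
end

section
/- Suppose c_1 >= c_2 >= ... >= c_k >= 0 and d_1,...,d_k > 0 are reals, and for every i in {1,...,k} we have c_i < (1/alpha) * (1 / (d_1 + ... + d_i)), where alpha = 1 + log((d_1+...+d_k)/d_1). Then sum_{i=1}^k d_i * c_i < 1. -/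
open Finset

/-- Key: sum of f i / S i is at most 1 + log (S n / f 0). -/
lemma key_nat (f : ℕ → ℝ) (hf : ∀ n, 0 < f n) (n : ℕ) :
    ∑ i ∈ Finset.range (n + 1), f i / (∑ j ∈ Finset.range (i + 1), f j) ≤
      1 + Real.log ((∑ j ∈ Finset.range (n + 1), f j) / f 0) := by
  have hS : ∀ m : ℕ, 0 < ∑ j ∈ Finset.range (m + 1), f j := by
    intro m
    exact Finset.sum_pos (fun j _ => hf j) ⟨0, by simp⟩
  induction n with
  | zero =>
    simp [div_self (hf 0).ne']
  | succ n ih =>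
    rw [Finset.sum_range_succ (fun i => f i / _)]
    have h1 : f (n + 1) / (∑ j ∈ Finset.range (n + 2), f j) ≤
        Real.log ((∑ j ∈ Finset.range (n + 2), f j) / f 0)
          - Real.log ((∑ j ∈ Finset.range (n + 1), f j) / f 0) := by
      have hSn := hS n
      have hSn1 := hS (n + 1)
      rw [Real.log_div hSn1.ne' (hf 0).ne', Real.log_div hSn.ne' (hf 0).ne']
      have hlog : Real.log ((∑ j ∈ Finset.range (n + 1), f j) /
          (∑ j ∈ Finset.range (n + 2), f j)) ≤
          (∑ j ∈ Finset.range (n + 1), f j) / (∑ j ∈ Finset.range (n + 2), f j) - 1 :=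
        Real.log_le_sub_one_of_pos (by positivity)
      rw [Real.log_div hSn.ne' hSn1.ne'] at hlog
      have hsum : (∑ j ∈ Finset.range (n + 2), f j) =
          (∑ j ∈ Finset.range (n + 1), f j) + f (n + 1) := Finset.sum_range_succ f (n + 1)
      have : (∑ j ∈ Finset.range (n + 1), f j) / (∑ j ∈ Finset.range (n + 2), f j) - 1
          = -(f (n + 1) / (∑ j ∈ Finset.range (n + 2), f j)) := by
        field_simp
        linarith [hsum]
      linarith [hlog, this ▸ hlog]
    linarith [ih]

/-- If `c` is nonincreasing and nonnegative, `d` positive, and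
`c i < (1/α) * (1 / D i)` for every `i` where `D i = d 1 + ⋯ + d i` are the prefix
sums and `α = 1 + log(D k / d 1)`, then `∑ d i * c i < 1`. -/
theorem stmt3 (k : ℕ) (c d : Fin (k + 1) → ℝ)
    (hmono : ∀ i j : Fin (k + 1), i ≤ j → c j ≤ c i)
    (hc : ∀ i, 0 ≤ c i) (hd : ∀ i, 0 < d i)
    (hlt : ∀ i, c i <
      (1 / (1 + Real.log ((∑ j ∈ Finset.Iic (Fin.last k), d j) / d 0))) *
        (1 / ∑ j ∈ Finset.Iic i, d j)) :
    ∑ i, d i * c i < 1 := by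
  set f : ℕ → ℝ := fun n => d ⟨min n k, by omega⟩ with hf_def
  have hf : ∀ n, 0 < f n := fun n => hd _
  have hdf : ∀ i : Fin (k + 1), d i = f i.val := by
    intro i
    simp only [hf_def]
    congr 1
    exact Fin.ext (by simp [Nat.min_eq_left (Nat.lt_succ_iff.mp i.isLt)])
  have hrange : ∀ i : Fin (k + 1), Finset.range (i.val + 1) = Finset.Iic i.val := by
    intro i; ext x; simp [Nat.lt_succ_iff]
  have hIic : ∀ i : Fin (k + 1), (∑ j ∈ Finset.Iic i, d j) =
      ∑ j ∈ Finset.range (i.val + 1), f j := by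
    intro i
    rw [hrange, ← Fin.map_valEmbedding_Iic, Finset.sum_map]
    exact Finset.sum_congr rfl fun j _ => hdf j
  have hDlast : (∑ j ∈ Finset.Iic (Fin.last k), d j) = ∑ j ∈ Finset.range (k + 1), f j := by
    simpa using hIic (Fin.last k)
  have hf0 : f 0 = d 0 := (hdf 0).symm
  set α : ℝ := 1 + Real.log ((∑ j ∈ Finset.Iic (Fin.last k), d j) / d 0) with hα
  have hα1 : 1 ≤ α := by
    have h1 : (1 : ℝ) ≤ (∑ j ∈ Finset.Iic (Fin.last k), d j) / d 0 := by
      rw [le_div_iff₀ (hd 0), one_mul]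
      exact Finset.single_le_sum (f := d) (fun j _ => (hd j).le) (by simp)
    have h2 := Real.log_nonneg h1
    rw [hα]; linarith
  have hαpos : 0 < α := lt_of_lt_of_le one_pos hα1
  have hkey := key_nat f hf k
  have hstep : ∑ i, d i * c i < ∑ i : Fin (k + 1),
      d i * ((1 / α) * (1 / ∑ j ∈ Finset.Iic i, d j)) := by
    apply Finset.sum_lt_sum_of_nonempty (by simp)
    intro i _
    exact mul_lt_mul_of_pos_left (hlt i) (hd i)
  have heq : ∑ i : Fin (k + 1), d i * ((1 / α) * (1 / ∑ j ∈ Finset.Iic i, d j))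
      = (1 / α) * ∑ i ∈ Finset.range (k + 1), f i / (∑ j ∈ Finset.range (i + 1), f j) := by
    rw [Finset.mul_sum]
    rw [show (∑ i : Fin (k + 1), d i * ((1 / α) * (1 / ∑ j ∈ Finset.Iic i, d j)))
        = ∑ i : Fin (k + 1), f i.val * ((1 / α) * (1 / ∑ j ∈ Finset.range (i.val + 1), f j))
      from Finset.sum_congr rfl fun i _ => by rw [← hdf, ← hIic]]
    rw [Fin.sum_univ_eq_sum_range
      (fun n => f n * ((1 / α) * (1 / ∑ j ∈ Finset.range (n + 1), f j)))]
    exact Finset.sum_congr rfl fun n _ => by ring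
  calc ∑ i, d i * c i < _ := hstep
    _ = (1 / α) * ∑ i ∈ Finset.range (k + 1), f i / (∑ j ∈ Finset.range (i + 1), f j) := heq
    _ ≤ (1 / α) * α := by
        apply mul_le_mul_of_nonneg_left _ (by positivity)
        rw [hα, hDlast, ← hf0]
        exact hkey
    _ = 1 := by field_simp
end

section
/- Let d_1,...,d_k > 0 be reals and let D_i = d_1 + ... + d_i denote the prefix sums. Then sum_{i=1}^k d_i / D_i <= 1 + log(D_k / d_1). -/
open Finset

private lemma nat_version (e : ℕ → ℝ) (he : ∀ i, 0 < e i) (n : ℕ) :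
    ∑ i ∈ Finset.range (n + 1), e i / (∑ j ∈ Finset.range (i + 1), e j) ≤
      1 + Real.log ((∑ j ∈ Finset.range (n + 1), e j) / e 0) := by
  induction n with
  | zero => simp [div_self (he 0).ne']
  | succ n ih =>
    have hS : 0 < ∑ j ∈ Finset.range (n + 1), e j :=
      Finset.sum_pos (fun i _ => he i) (by simp)
    have hS' : 0 < ∑ j ∈ Finset.range (n + 2), e j :=
      Finset.sum_pos (fun i _ => he i) (by simp)
    set S := ∑ j ∈ Finset.range (n + 1), e j with hSdef
    set S' := ∑ j ∈ Finset.range (n + 2), e j with hS'def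
    have hstep : S' = S + e (n + 1) := by
      rw [hS'def, Finset.sum_range_succ]
    have key : e (n + 1) / S' ≤ Real.log S' - Real.log S := by
      have hlog : Real.log (S / S') ≤ S / S' - 1 :=
        Real.log_le_sub_one_of_pos (div_pos hS hS')
      have : Real.log (S / S') = Real.log S - Real.log S' :=
        Real.log_div hS.ne' hS'.ne'
      rw [this] at hlog
      have : S / S' - 1 = -(e (n + 1) / S') := by
        field_simp
        linarith [hstep]
      rw [this] at hlog
      linarith
    rw [Finset.sum_range_succ]
    have hlogdiv : Real.log (S / e 0) = Real.log S - Real.log (e 0) :=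
      Real.log_div hS.ne' (he 0).ne'
    have hlogdiv' : Real.log (S' / e 0) = Real.log S' - Real.log (e 0) :=
      Real.log_div hS'.ne' (he 0).ne'
    calc (∑ i ∈ Finset.range (n + 1), e i / (∑ j ∈ Finset.range (i + 1), e j))
          + e (n + 1) / S'
        ≤ (1 + Real.log (S / e 0)) + (Real.log S' - Real.log S) := by
          exact add_le_add ih key
      _ = 1 + Real.log (S' / e 0) := by rw [hlogdiv, hlogdiv']; ring

/-- With prefix sums `D i = d 0 + ⋯ + d i` of positive reals,
`∑ i, d i / D i ≤ 1 + log (D_last / d 0)`. -/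
theorem stmt4 (k : ℕ) (d : Fin (k + 1) → ℝ) (hd : ∀ i, 0 < d i) :
    ∑ i, d i / (∑ j ∈ Finset.Iic i, d j) ≤
      1 + Real.log ((∑ j ∈ Finset.Iic (Fin.last k), d j) / d 0) := by
  set e : ℕ → ℝ := fun n => if h : n < k + 1 then d ⟨n, h⟩ else 1 with he_def
  have he : ∀ i, 0 < e i := by
    intro i
    simp only [he_def]
    split
    · exact hd _
    · exact one_pos
  have hIic : ∀ i : Fin (k + 1), (∑ j ∈ Finset.Iic i, d j) =
      ∑ j ∈ Finset.range ((i : ℕ) + 1), e j := by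
    intro i
    rw [show Finset.range ((i : ℕ) + 1) = Finset.Iic (i : ℕ) from by
      ext x; simp [Nat.lt_succ_iff]]
    rw [← Fin.map_valEmbedding_Iic, Finset.sum_map]
    apply Finset.sum_congr rfl
    intro j hj
    simp [he_def, j.isLt, not_lt.mpr (Nat.lt_succ_iff.mp j.isLt)]
  have he0 : e 0 = d 0 := by simp [he_def]
  have := nat_version e he k
  rw [Finset.sum_range (fun i => e i / ∑ j ∈ Finset.range (i + 1), e j)] at this
  rw [hIic (Fin.last k), ← he0]
  simp only [Fin.val_last]
  refine le_trans (le_of_eq (Finset.sum_congr rfl fun i _ => ?_)) this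
  rw [hIic i]
  congr 1
  simp [he_def, i.isLt, not_lt.mpr (Nat.lt_succ_iff.mp i.isLt)]
end

section
/- With the same setup as the exponential distance weight (finite set V of size n, symmetric rdist satisfying the triangle inequality, h > 0, 1 <= alpha, and w defined by truncating 2^{-alpha * rdist(u,v)/h} to 0 when rdist(u,v) > (2h log_2 n)/alpha), for all u,v,w in V: w(u,v') <= 2^{alpha * rdist(v',v)/h} * (w(u,v) + 1/n^2), where v' denotes the third vertex. -/
open scoped ENNReal


lemma two_rpow_le {a b : ℝ} (hab : a ≤ b) : (2:ℝ)^a ≤ (2:ℝ)^b :=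
  (Real.rpow_le_rpow_left_iff (by norm_num)).2 hab

lemma key_pow (n : ℕ) (hn2 : 2 ≤ n) (h α : ℝ) (hh : 0 < h) (hα : 1 ≤ α) {x : ℝ}
    (hx : 2 * h * (Real.log n / Real.log 2) / α ≤ x) :
    (n : ℝ) ^ 2 ≤ (2 : ℝ) ^ (α * x / h) := by
  have hα0 : (0:ℝ) < α := lt_of_lt_of_le one_pos hα
  have hnpos : (0:ℝ) < n := by positivity
  have hlog2 : Real.log 2 ≠ 0 := ne_of_gt (Real.log_pos (by norm_num))
  have base : (n : ℝ) ^ 2 = (2 : ℝ) ^ (α * (2 * h * (Real.log n / Real.log 2) / α) / h) := by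
    have he : α * (2 * h * (Real.log n / Real.log 2) / α) / h = 2 * Real.log n / Real.log 2 := by
      field_simp
    rw [he, Real.rpow_def_of_pos (by norm_num : (0:ℝ) < 2)]
    rw [show Real.log 2 * (2 * Real.log n / Real.log 2) = Real.log n + Real.log n by
      field_simp; ring]
    rw [Real.exp_add, Real.exp_log hnpos]
    ring
  rw [base]
  apply two_rpow_le
  have : 0 < α / h := by positivity
  calc α * (2 * h * (Real.log n / Real.log 2) / α) / h
      = (2 * h * (Real.log n / Real.log 2) / α) * (α / h) := by ring
    _ ≤ x * (α / h) := by gcongr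
    _ = α * x / h := by ring

/-- The (untruncated) exponential kernel `2^{-α·rdist(u,v)/h}`, taken to be `0` when
`rdist(u,v) = ∞`. -/
noncomputable def expKer {V : Type*} (rdist : V → V → ℝ≥0∞) (α h : ℝ) (u v : V) : ℝ≥0∞ :=
  if rdist u v = ⊤ then 0
  else ENNReal.ofReal ((2 : ℝ) ^ (-(α * (rdist u v).toReal / h)))

open Classical in
/-- The `h`-length `α`-exponential distance weight: `1` on the diagonal, the exponential
kernel within round-trip radius `2h·log₂ n / α`, and `0` beyond. -/
noncomputable def expW {V : Type*} (rdist : V → V → ℝ≥0∞) (α h : ℝ) (n : ℕ)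
    (u v : V) : ℝ≥0∞ :=
  if u = v then 1
  else if rdist u v ≤ ENNReal.ofReal (2 * h * (Real.log n / Real.log 2) / α) then
    expKer rdist α h u v
  else 0

/-- The growth factor `2^{α·rdist(v',v)/h}`, taken to be `∞` when `rdist(v',v) = ∞`. -/
noncomputable def expFac {V : Type*} (rdist : V → V → ℝ≥0∞) (α h : ℝ)
    (v' v : V) : ℝ≥0∞ :=
  if rdist v' v = ⊤ then ⊤
  else ENNReal.ofReal ((2 : ℝ) ^ (α * (rdist v' v).toReal / h))

/-- Upper half of property 4 of the exponential distance weight: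
`w(u,v') ≤ 2^{α·rdist(v',v)/h} · (w(u,v) + 1/n²)`. -/
theorem stmt7 {V : Type*} [Fintype V] (n : ℕ) (hn : n = Fintype.card V) (hn2 : 2 ≤ n)
    (rdist : V → V → ℝ≥0∞)
    (hsym : ∀ u v, rdist u v = rdist v u)
    (hdiag : ∀ u, rdist u u = 0)
    (htri : ∀ a b c, rdist a c ≤ rdist a b + rdist b c)
    (h α : ℝ) (hh : 0 < h) (hα : 1 ≤ α) :
    ∀ u v v', expW rdist α h n u v' ≤
      expFac rdist α h v' v *
        (expW rdist α h n u v + ENNReal.ofReal (1 / (n : ℝ) ^ 2)) := by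
  intro u v v'
  have hα0 : (0:ℝ) < α := lt_of_lt_of_le one_pos hα
  have hnpos : (0:ℝ) < n := by positivity
  have hc : (0:ℝ≥0∞) < ENNReal.ofReal (1 / (n : ℝ) ^ 2) := by
    rw [ENNReal.ofReal_pos]; positivity
  have hsum : expW rdist α h n u v + ENNReal.ofReal (1 / (n : ℝ) ^ 2) ≠ 0 :=
    ne_of_gt (lt_of_lt_of_le hc le_add_self)
  by_cases huv' : u = v'
  · subst huv'
    rw [show expW rdist α h n u u = 1 by rw [expW]; exact if_pos rfl]
    by_cases hvv : rdist u v = ⊤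
    · rw [expFac, if_pos hvv, ENNReal.top_mul hsum]
      exact le_top
    · have hfac : expFac rdist α h u v
          = ENNReal.ofReal ((2:ℝ)^(α * (rdist u v).toReal / h)) := if_neg hvv
      by_cases huv : u = v
      · have hw : expW rdist α h n u v = 1 := by rw [expW]; exact if_pos huv
        rw [hw, hfac]
        calc (1:ℝ≥0∞) = 1 * 1 := (one_mul 1).symm
          _ ≤ _ := mul_le_mul'
              (ENNReal.one_le_ofReal.2 (by
                have : (1:ℝ) = (2:ℝ)^(0:ℝ) := (Real.rpow_zero 2).symm
                rw [this]; exact two_rpow_le (by positivity)))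
              le_self_add
      · by_cases h2 : rdist u v ≤ ENNReal.ofReal (2 * h * (Real.log n / Real.log 2) / α)
        · have hw : expW rdist α h n u v
              = ENNReal.ofReal ((2:ℝ)^(-(α * (rdist u v).toReal / h))) := by
            rw [expW, if_neg huv, if_pos h2, expKer, if_neg hvv]
          rw [hw, hfac]
          calc (1:ℝ≥0∞)
              = ENNReal.ofReal ((2:ℝ)^(α * (rdist u v).toReal / h)
                  * (2:ℝ)^(-(α * (rdist u v).toReal / h))) := by
                rw [← Real.rpow_add (by norm_num : (0:ℝ) < 2)]
                simp
            _ = _ * _ := ENNReal.ofReal_mul (by positivity)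
            _ ≤ _ := mul_le_mul' le_rfl le_self_add
        · have hw : expW rdist α h n u v = 0 := by
            rw [expW, if_neg huv, if_neg h2]
          rw [hw, hfac, zero_add, ← ENNReal.ofReal_mul (by positivity)]
          refine ENNReal.one_le_ofReal.2 ?_
          have hd : 2 * h * (Real.log n / Real.log 2) / α ≤ (rdist u v).toReal :=
            (ENNReal.ofReal_le_iff_le_toReal hvv).1 (le_of_lt (not_le.1 h2))
          have hkey := key_pow n hn2 h α hh hα hd
          rw [mul_one_div, le_div_iff₀ (by positivity)]
          linarith
  · by_cases hle : rdist u v' ≤ ENNReal.ofReal (2 * h * (Real.log n / Real.log 2) / α)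
    · have hfin' : rdist u v' ≠ ⊤ := ne_top_of_le_ne_top ENNReal.ofReal_ne_top hle
      have hL : expW rdist α h n u v'
          = ENNReal.ofReal ((2:ℝ)^(-(α * (rdist u v').toReal / h))) := by
        rw [expW, if_neg huv', if_pos hle, expKer, if_neg hfin']
      rw [hL]
      by_cases hvv : rdist v' v = ⊤
      · rw [expFac, if_pos hvv, ENNReal.top_mul hsum]
        exact le_top
      · have hfac : expFac rdist α h v' v
            = ENNReal.ofReal ((2:ℝ)^(α * (rdist v' v).toReal / h)) := if_neg hvv
        by_cases huv : u = v
        · have hw : expW rdist α h n u v = 1 := by rw [expW]; exact if_pos huv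
          rw [hw, hfac]
          calc ENNReal.ofReal ((2:ℝ)^(-(α * (rdist u v').toReal / h)))
              ≤ 1 := by
                refine ENNReal.ofReal_le_one.2 ?_
                rw [show (1:ℝ) = (2:ℝ)^(0:ℝ) from (Real.rpow_zero 2).symm]
                apply two_rpow_le
                have h0 : 0 ≤ (rdist u v').toReal := ENNReal.toReal_nonneg
                have h1 : 0 ≤ α * (rdist u v').toReal / h := by positivity
                linarith
            _ = 1 * 1 := (one_mul 1).symm
            _ ≤ _ := mul_le_mul'
                (ENNReal.one_le_ofReal.2 (by
                  rw [show (1:ℝ) = (2:ℝ)^(0:ℝ) from (Real.rpow_zero 2).symm]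
                  exact two_rpow_le (by positivity)))
                le_self_add
        · have hfin : rdist u v ≠ ⊤ := by
            intro htop
            have hts := htri u v' v
            rw [htop, top_le_iff] at hts
            exact (ENNReal.add_ne_top.2 ⟨hfin', hvv⟩) hts
          set d' := (rdist u v').toReal with hd'
          set e := (rdist v' v).toReal with he
          set d := (rdist u v).toReal with hdd
          have htr : d ≤ d' + e := by
            calc d ≤ ((rdist u v') + (rdist v' v)).toReal :=
                  ENNReal.toReal_mono (ENNReal.add_ne_top.2 ⟨hfin', hvv⟩) (htri u v' v)
              _ = d' + e := ENNReal.toReal_add hfin' hvv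
          by_cases h2 : rdist u v ≤ ENNReal.ofReal (2 * h * (Real.log n / Real.log 2) / α)
          · have hw : expW rdist α h n u v
                = ENNReal.ofReal ((2:ℝ)^(-(α * d / h))) := by
              rw [expW, if_neg huv, if_pos h2, expKer, if_neg hfin]
            rw [hw, hfac]
            calc ENNReal.ofReal ((2:ℝ)^(-(α * d' / h)))
                ≤ ENNReal.ofReal ((2:ℝ)^(α * e / h) * (2:ℝ)^(-(α * d / h))) := by
                  rw [← Real.rpow_add (by norm_num : (0:ℝ) < 2)]
                  apply ENNReal.ofReal_le_ofReal
                  apply two_rpow_le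
                  have hk : (0:ℝ) ≤ α / h := by positivity
                  have h3 := mul_le_mul_of_nonneg_left htr hk
                  have e1 : α * d / h = α / h * d := by ring
                  have e2 : α * d' / h = α / h * d' := by ring
                  have e3 : α * e / h = α / h * e := by ring
                  rw [e1, e2, e3]
                  linarith [mul_le_mul_of_nonneg_left htr hk]
              _ = _ * _ := ENNReal.ofReal_mul (by positivity)
              _ ≤ _ := mul_le_mul' le_rfl le_self_add
          · have hw : expW rdist α h n u v = 0 := by
              rw [expW, if_neg huv, if_neg h2]
            rw [hw, hfac, zero_add, ← ENNReal.ofReal_mul (by positivity)]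
            apply ENNReal.ofReal_le_ofReal
            have hd2 : 2 * h * (Real.log n / Real.log 2) / α ≤ d :=
              (ENNReal.ofReal_le_iff_le_toReal hfin).1 (le_of_lt (not_le.1 h2))
            have hkey := key_pow n hn2 h α hh hα (hd2.trans htr)
            rw [mul_one_div, le_div_iff₀ (by positivity)]
            calc (2:ℝ)^(-(α * d' / h)) * (n:ℝ)^2
                ≤ (2:ℝ)^(-(α * d' / h)) * (2:ℝ)^(α * (d' + e) / h) :=
                  mul_le_mul_of_nonneg_left hkey (by positivity)
              _ = (2:ℝ)^(α * e / h) := by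
                  rw [← Real.rpow_add (by norm_num : (0:ℝ) < 2)]
                  congr 1
                  field_simp
                  ring
    · have hw0 : expW rdist α h n u v' = 0 := by
        rw [expW, if_neg huv', if_neg hle]
      rw [hw0]
      exact zero_le
end

section
/- Let G be a graph, C a 2h-length moving cut of size |C| = sum_e u(e)*C(e), and D a demand with every demand pair (u,v) satisfying dist_{G}(u,v) <= h but dist_{G-C}(u,v) > 2h, where G-C increases the length of edge e by 2h*C(e). Then any routing of D along paths of length at most h in G has congestion at least |D| * h / (2h * |C|) = (1/2) * |D|/|C|. -/
open Finset

/-- Moving-cut congestion lower bound: if a moving cut `C` (with values in `[0,1]`,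
length increase `2h·C(e)`) fully `2h`-separates the routed demand — every flow path
has `ℓ`-length at most `h` in `G` but length more than `2h` in `G - C` — then any
congestion bound `γ` for the routing satisfies `γ ≥ |D|·h / (2h·|C|)`. -/
theorem stmt10 {E ι : Type*} [Fintype E] [Fintype ι] [DecidableEq E]
    (u ℓ C : E → ℝ) (hu : ∀ e, 0 < u e) (hℓ : ∀ e, 0 < ℓ e)
    (hC0 : ∀ e, 0 ≤ C e) (hC1 : ∀ e, C e ≤ 1)
    (h : ℝ) (hh : 0 < h)
    (P : ι → Finset E) (f : ι → ℝ) (hf : ∀ i, 0 ≤ f i)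
    (hlen : ∀ i, ∑ e ∈ P i, ℓ e ≤ h)
    (hsep : ∀ i, 2 * h < ∑ e ∈ P i, (ℓ e + 2 * h * C e))
    (γ : ℝ) (hγ0 : 0 ≤ γ)
    (hcong : ∀ e, ∑ i ∈ Finset.univ.filter (fun i => e ∈ P i), f i ≤ γ * u e) :
    (∑ i, f i) * h / (2 * h * ∑ e, u e * C e) ≤ γ := by
  set S := ∑ e, u e * C e with hS
  have hS0 : 0 ≤ S := Finset.sum_nonneg fun e _ => mul_nonneg (hu e).le (hC0 e)
  rcases eq_or_lt_of_le hS0 with hS0' | hSpos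
  · rw [← hS0', mul_zero, div_zero]; exact hγ0
  · rw [div_le_iff₀ (by positivity)]
    -- key per-path bound: h ≤ ∑_{e ∈ P i} 2h C e
    have key : ∀ i, h ≤ ∑ e ∈ P i, 2 * h * C e := by
      intro i
      have := hsep i
      rw [Finset.sum_add_distrib] at this
      linarith [hlen i]
    have step1 : (∑ i, f i) * h ≤ ∑ i, f i * ∑ e ∈ P i, 2 * h * C e := by
      rw [Finset.sum_mul]
      exact Finset.sum_le_sum fun i _ => mul_le_mul_of_nonneg_left (key i) (hf i)
    have swap : ∑ i, f i * ∑ e ∈ P i, 2 * h * C e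
        = ∑ e, (2 * h * C e) * ∑ i ∈ Finset.univ.filter (fun i => e ∈ P i), f i := by
      simp only [Finset.mul_sum, Finset.sum_filter]
      rw [Finset.sum_comm]
      refine Finset.sum_congr rfl fun i _ => ?_
      simp only [mul_ite, mul_zero]
      rw [← Finset.sum_filter, Finset.filter_univ_mem]
      exact Finset.sum_congr rfl fun e _ => mul_comm _ _
    have step2 : ∑ e, (2 * h * C e) * ∑ i ∈ Finset.univ.filter (fun i => e ∈ P i), f i
        ≤ ∑ e, (2 * h * C e) * (γ * u e) :=
      Finset.sum_le_sum fun e _ =>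
        mul_le_mul_of_nonneg_left (hcong e) (mul_nonneg (by positivity) (hC0 e))
    have step3 : ∑ e, (2 * h * C e) * (γ * u e) = γ * (2 * h * S) := by
      rw [hS, Finset.mul_sum, Finset.mul_sum]
      congr 1; ext e; ring
    linarith
end
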